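/- Let m ≥ 2, π a permutation of {1,...,m}, 1 ≤ t ≤ m-1 with π(m) > π(α) for 1 ≤ α ≤ t. Set σ(α) = π(m+1-α). Let i, j ∈ [0, 2^m) be restricted indices (bits at π(1),...,π(t) equal to d) with i_{σ(1)} = j_{σ(1)}, and let β ≥ 2 be the smallest index with i_{σ(β)} ≠ j_{σ(β)}. Define i' and j' by flipping bit σ(β-1) of i and j respectively. Then i' and j' are also restricted indices, i' ≤ ∑_{α=t+1}^{m} 2^{π(α)-1} - 2^{σ(β-1)-1} + 1 - 1 < L and similarly j' < L, where L = ∑_{α=t+1}^{m} 2^{π(α)-1} + 1, after subtracting the offset k_0 = ∑ d_α 2^{π(α)-1}. -/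

import Mathlib

open Finset

/-- `bit l i` is the `l`-th binary digit of `i` (positions indexed from 1). -/
def bit (l i : ℕ) : ℕ := i / 2 ^ (l - 1) % 2

/-- Flip the binary digit at position `v` (positions indexed from 1) of `i`. -/
def flipBit (v i : ℕ) : ℕ := if bit v i = 0 then i + 2 ^ (v - 1) else i - 2 ^ (v - 1)

lemma bit_eq_toNat (l i : ℕ) : bit l i = (i.testBit (l - 1)).toNat := by
  rw [bit, Nat.testBit_eq_decide_div_mod_eq]
  rcases Nat.mod_two_eq_zero_or_one (i / 2 ^ (l - 1)) with h | h <;> simp [h]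

/-- If bit `w` of `n` is clear, the low part mod `2^k` plus `2^w` stays below `2^k`. -/
lemma aux_low_lt {w k n : ℕ} (hwk : w < k) (h : n.testBit w = false) :
    n % 2 ^ k + 2 ^ w < 2 ^ k := by
  set r := n % 2 ^ k with hrdef
  have h1 : r.testBit w = false := by
    rw [hrdef, Nat.testBit_mod_two_pow]; simp [h]
  have h2 : r / 2 ^ w % 2 = 0 := by
    rw [Nat.testBit_eq_decide_div_mod_eq] at h1
    simp only [decide_eq_false_iff_not] at h1
    omega
  have h3 : r / 2 ^ w < 2 ^ (k - w) := by
    apply Nat.div_lt_of_lt_mul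
    calc r < 2 ^ k := Nat.mod_lt _ (Nat.pow_pos (by norm_num))
      _ = 2 ^ w * 2 ^ (k - w) := by rw [← pow_add]; congr 1; omega
  have heven : 2 ^ (k - w) = 2 * 2 ^ (k - w - 1) := by
    rw [← pow_succ']; congr 1; omega
  have h4 : r / 2 ^ w + 2 ≤ 2 ^ (k - w) := by omega
  have h5 : r < 2 ^ w * (r / 2 ^ w + 1) := by
    have hdm := Nat.div_add_mod r (2 ^ w)
    have hml := Nat.mod_lt r (show 0 < 2 ^ w from Nat.pow_pos (n := w) (by norm_num))
    have hexp : 2 ^ w * (r / 2 ^ w + 1) = 2 ^ w * (r / 2 ^ w) + 2 ^ w := by ring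
    linarith
  calc r + 2 ^ w < 2 ^ w * (r / 2 ^ w + 1) + 2 ^ w := by omega
    _ = 2 ^ w * (r / 2 ^ w + 2) := by ring
    _ ≤ 2 ^ w * 2 ^ (k - w) := Nat.mul_le_mul_left _ h4
    _ = 2 ^ k := by rw [← pow_add]; congr 1; omega

lemma testBit_two_pow_add_lt {w k : ℕ} (hwk : w < k) {n : ℕ} (h : n.testBit w = false) :
    (2 ^ w + n).testBit k = n.testBit k := by
  have hdm := Nat.div_add_mod n (2 ^ k)
  have hlow := aux_low_lt hwk h
  have hdiv : (2 ^ w + n) / 2 ^ k = n / 2 ^ k := by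
    have : 2 ^ w + n = 2 ^ k * (n / 2 ^ k) + (n % 2 ^ k + 2 ^ w) := by omega
    rw [this, Nat.mul_add_div (Nat.pow_pos (by norm_num)),
      Nat.div_eq_of_lt hlow, Nat.add_zero]
  rw [Nat.testBit_eq_decide_div_mod_eq, Nat.testBit_eq_decide_div_mod_eq, hdiv]

lemma testBit_two_pow_add_ne {w k : ℕ} (hwk : w ≠ k) {n : ℕ} (h : n.testBit w = false) :
    (2 ^ w + n).testBit k = n.testBit k := by
  rcases lt_or_gt_of_ne hwk with hlt | hgt
  · exact testBit_two_pow_add_lt hlt h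
  · exact Nat.testBit_two_pow_add_gt hgt n

lemma flipBit_eq_cases (v n : ℕ) :
    (n.testBit (v - 1) = false ∧ flipBit v n = 2 ^ (v - 1) + n) ∨
      (n.testBit (v - 1) = true ∧ n = 2 ^ (v - 1) + flipBit v n ∧
        (flipBit v n).testBit (v - 1) = false) := by
  rw [flipBit]
  by_cases h : bit v n = 0
  · left
    have hb : n.testBit (v - 1) = false := by
      rw [bit_eq_toNat] at h
      cases hh : n.testBit (v - 1) <;> simp [hh] at h ⊢
    simp [h, hb, Nat.add_comm]
  · right
    have hb : n.testBit (v - 1) = true := by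
      rw [bit_eq_toNat] at h
      cases hh : n.testBit (v - 1) <;> simp [hh] at h ⊢
    have hge : 2 ^ (v - 1) ≤ n := by
      by_contra hc
      rw [Nat.testBit_lt_two_pow (by omega)] at hb
      exact Bool.false_ne_true hb
    refine ⟨hb, ?_, ?_⟩
    · simp [h]; omega
    · simp only [h, if_false]
      have hn' : n = 2 ^ (v - 1) + (n - 2 ^ (v - 1)) := by omega
      by_contra hc
      have hc' : (n - 2 ^ (v - 1)).testBit (v - 1) = true := by
        cases hh : (n - 2 ^ (v - 1)).testBit (v - 1)
        · exact absurd hh hc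
        · rfl
      have := Nat.testBit_two_pow_add_eq (n - 2 ^ (v - 1)) (v - 1)
      rw [← hn', hb, hc'] at this
      simp at this

lemma bit_flipBit_ne {v l n : ℕ} (hv : 1 ≤ v) (hl : 1 ≤ l) (hne : l ≠ v) :
    bit l (flipBit v n) = bit l n := by
  have hne' : (v - 1) ≠ (l - 1) := by omega
  rcases flipBit_eq_cases v n with ⟨hb, heq⟩ | ⟨hb, heq, hb'⟩
  · rw [bit_eq_toNat, bit_eq_toNat, heq, testBit_two_pow_add_ne hne' hb]
  · rw [bit_eq_toNat, bit_eq_toNat]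
    conv_rhs => rw [heq]
    rw [testBit_two_pow_add_ne hne' hb']

lemma flipBit_lt_two_pow {v m n : ℕ} (hv : 1 ≤ v) (hvm : v ≤ m) (hn : n < 2 ^ m) :
    flipBit v n < 2 ^ m := by
  rcases flipBit_eq_cases v n with ⟨hb, heq⟩ | ⟨hb, heq, hb'⟩
  · rw [heq]
    have := aux_low_lt (show v - 1 < m by omega) hb
    rw [Nat.mod_eq_of_lt hn] at this
    omega
  · have hle : flipBit v n ≤ n := by
      conv_rhs => rw [heq]
      exact Nat.le_add_left _ _
    exact lt_of_le_of_lt hle hn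

lemma sum_bits (m : ℕ) : ∀ n : ℕ, n < 2 ^ m →
    ∑ l ∈ Finset.range m, bit (l + 1) n * 2 ^ l = n := by
  induction m with
  | zero => intro n hn; interval_cases n; simp
  | succ m ih =>
    intro n hn
    rw [Finset.sum_range_succ']
    have hterm : ∀ l, bit (l + 1 + 1) n * 2 ^ (l + 1) = (bit (l + 1) (n / 2) * 2 ^ l) * 2 := by
      intro l
      have h2 : n / 2 / 2 ^ l = n / 2 ^ (l + 1) := by
        rw [Nat.div_div_eq_div_mul, ← pow_succ']
      simp only [bit, Nat.add_sub_cancel]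
      rw [← h2, pow_succ]
      ring
    simp only [hterm, ← Finset.sum_mul]
    rw [ih (n / 2) (by omega)]
    simp only [bit, Nat.add_sub_cancel, pow_zero, Nat.div_one, mul_one]
    omega

lemma sum_Icc_perm {m : ℕ} (π : Equiv.Perm ℕ)
    (hπ : ∀ α, α ∈ Finset.Icc 1 m ↔ π α ∈ Finset.Icc 1 m) (f : ℕ → ℕ) :
    ∑ α ∈ Finset.Icc 1 m, f (π α) = ∑ p ∈ Finset.Icc 1 m, f p :=
  Finset.sum_equiv π hπ (fun _ _ => rfl)

lemma sum_pow_lt {m t : ℕ} (π : Equiv.Perm ℕ)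
    (hπ : ∀ α, α ∈ Finset.Icc 1 m ↔ π α ∈ Finset.Icc 1 m) :
    (∑ α ∈ Finset.Icc (t + 1) m, 2 ^ (π α - 1)) < 2 ^ m := by
  have hsub : Finset.Icc (t + 1) m ⊆ Finset.Icc 1 m := by
    intro x hx; simp only [Finset.mem_Icc] at *; omega
  calc (∑ α ∈ Finset.Icc (t + 1) m, 2 ^ (π α - 1))
      ≤ ∑ α ∈ Finset.Icc 1 m, 2 ^ (π α - 1) :=
        Finset.sum_le_sum_of_subset hsub
    _ = ∑ p ∈ Finset.Icc 1 m, 2 ^ (p - 1) := sum_Icc_perm π hπ (fun p => 2 ^ (p - 1))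
    _ = ∑ l ∈ Finset.range m, 2 ^ l := by
        rw [← Finset.Ico_add_one_right_eq_Icc, Finset.sum_Ico_eq_sum_range]
        simp
    _ = 2 ^ m - 1 := by
        rw [Nat.geomSum_eq le_rfl]
        simp
    _ < 2 ^ m := by
        have : 0 < 2 ^ m := Nat.pow_pos (by norm_num)
        omega

lemma key_bound {m t : ℕ} (ht : t ≤ m) (π : Equiv.Perm ℕ)
    (hπ : ∀ α, α ∈ Finset.Icc 1 m ↔ π α ∈ Finset.Icc 1 m)
    {n : ℕ} (hn : n < 2 ^ m) (hR : ∀ α ∈ Finset.Icc 1 t, bit (π α) n = 0) :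
    n ≤ ∑ α ∈ Finset.Icc (t + 1) m, 2 ^ (π α - 1) := by
  have hrep : n = ∑ α ∈ Finset.Icc 1 m, bit (π α) n * 2 ^ (π α - 1) := by
    conv_lhs => rw [← sum_bits m n hn]
    rw [sum_Icc_perm π hπ (fun p => bit p n * 2 ^ (p - 1))]
    rw [← Finset.Ico_add_one_right_eq_Icc, Finset.sum_Ico_eq_sum_range]
    apply Finset.sum_congr (by simp)
    intro l _
    rw [Nat.add_comm 1 l]
    simp
  have hsplit : Finset.Icc 1 m = Finset.Icc 1 t ∪ Finset.Icc (t + 1) m := by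
    ext x; simp only [Finset.mem_union, Finset.mem_Icc]; omega
  have hdisj : Disjoint (Finset.Icc 1 t) (Finset.Icc (t + 1) m) := by
    rw [Finset.disjoint_left]
    intro x hx hy; simp only [Finset.mem_Icc] at *; omega
  rw [hrep, hsplit, Finset.sum_union hdisj]
  have h1 : ∑ α ∈ Finset.Icc 1 t, bit (π α) n * 2 ^ (π α - 1) = 0 := by
    apply Finset.sum_eq_zero
    intro α hα
    rw [hR α hα, Nat.zero_mul]
  rw [h1, Nat.zero_add]
  apply Finset.sum_le_sum
  intro α _
  have : bit (π α) n ≤ 1 := by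
    simp only [bit]
    omega
  calc bit (π α) n * 2 ^ (π α - 1) ≤ 1 * 2 ^ (π α - 1) := Nat.mul_le_mul_right _ this
    _ = 2 ^ (π α - 1) := Nat.one_mul _

theorem stmt16 (m t : ℕ) (hm : 2 ≤ m) (ht1 : 1 ≤ t) (ht2 : t ≤ m - 1)
    (π : Equiv.Perm ℕ) (hπ : ∀ α, α ∈ Finset.Icc 1 m ↔ π α ∈ Finset.Icc 1 m)
    (hmax : ∀ α ∈ Finset.Icc 1 t, π α < π m)
    (i j β : ℕ)
    (hiL : i < (∑ α ∈ Finset.Icc (t + 1) m, 2 ^ (π α - 1)) + 1)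
    (hjL : j < (∑ α ∈ Finset.Icc (t + 1) m, 2 ^ (π α - 1)) + 1)
    (hiR : ∀ α ∈ Finset.Icc 1 t, bit (π α) i = 0)
    (hjR : ∀ α ∈ Finset.Icc 1 t, bit (π α) j = 0)
    (hβ2 : 2 ≤ β) (hβm : β ≤ m - t)
    (hσ1 : bit (π m) i = bit (π m) j)
    (hdiff : bit (π (m + 1 - β)) i ≠ bit (π (m + 1 - β)) j)
    (hmin : ∀ γ, 1 ≤ γ → γ < β → bit (π (m + 1 - γ)) i = bit (π (m + 1 - γ)) j) :
    (∀ α ∈ Finset.Icc 1 t, bit (π α) (flipBit (π (m + 1 - (β - 1))) i) = 0) ∧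
      (∀ α ∈ Finset.Icc 1 t, bit (π α) (flipBit (π (m + 1 - (β - 1))) j) = 0) ∧
      flipBit (π (m + 1 - (β - 1))) i < (∑ α ∈ Finset.Icc (t + 1) m, 2 ^ (π α - 1)) + 1 ∧
      flipBit (π (m + 1 - (β - 1))) j < (∑ α ∈ Finset.Icc (t + 1) m, 2 ^ (π α - 1)) + 1 := by
  set u := m + 1 - (β - 1) with hu
  have htm : t ≤ m := by omega
  have hum : u ∈ Finset.Icc 1 m := by simp only [Finset.mem_Icc]; omega
  have hv : π u ∈ Finset.Icc 1 m := (hπ u).mp hum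
  have hv1 : 1 ≤ π u := (Finset.mem_Icc.mp hv).1
  have hvm : π u ≤ m := (Finset.mem_Icc.mp hv).2
  have hSlt : (∑ α ∈ Finset.Icc (t + 1) m, 2 ^ (π α - 1)) < 2 ^ m := sum_pow_lt π hπ
  have hbit : ∀ (n : ℕ), (∀ α ∈ Finset.Icc 1 t, bit (π α) n = 0) →
      ∀ α ∈ Finset.Icc 1 t, bit (π α) (flipBit (π u) n) = 0 := by
    intro n hnR α hα
    have hα' : α ∈ Finset.Icc 1 m := by
      simp only [Finset.mem_Icc] at *; omega
    have hπα : π α ∈ Finset.Icc 1 m := (hπ α).mp hα'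
    have hπα1 : 1 ≤ π α := (Finset.mem_Icc.mp hπα).1
    have hαu : α ≠ u := by
      simp only [Finset.mem_Icc] at hα; omega
    have hπne : π α ≠ π u := fun h => hαu (π.injective h)
    rw [bit_flipBit_ne hv1 hπα1 hπne]
    exact hnR α hα
  have hlt : ∀ (n : ℕ), n < (∑ α ∈ Finset.Icc (t + 1) m, 2 ^ (π α - 1)) + 1 →
      (∀ α ∈ Finset.Icc 1 t, bit (π α) n = 0) →
      flipBit (π u) n < (∑ α ∈ Finset.Icc (t + 1) m, 2 ^ (π α - 1)) + 1 := by
    intro n hnL hnR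
    have hn2m : n < 2 ^ m := by omega
    have hflt : flipBit (π u) n < 2 ^ m := flipBit_lt_two_pow hv1 hvm hn2m
    have := key_bound htm π hπ hflt (hbit n hnR)
    omega
  exact ⟨hbit i hiR, hbit j hjR, hlt i hiL hiR, hlt j hjL hjR⟩
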